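/- Fix a positive integer n, write n = 3q + r with q = ⌊n/3⌋ and 0 ≤ r ≤ 2, and let h be an integer with q + r < h ≤ n. Then the number of sequences σ ∈ {±1}^n with max(h(σ), h(−σ)) = h equals 2·C(n, ⌊(n−h)/2⌋). -/

import Mathlib

namespace Napkin

variable {n q : ℕ}

/-- The napkin to the left of seat `s`; napkin `s` itself is the one to the right of
seat `s`, placed between seats `s` and `s + 1` around the circular table. -/
def leftNapkin (s : Fin n) : Fin n := ⟨((s : ℕ) + (n - 1)) % n, Nat.mod_lt _ s.pos⟩

/-- Process the diners `0, 1, …, n-1` in their arrival order.  Here `w i = j` means that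
diner `j` sits in seat `i` (so diner `j` sits in seat `w.symm j`), and `σ j = true`
means diner `j` prefers the napkin to their right.  Each diner takes their preferred
adjacent napkin if it is unclaimed, otherwise the other adjacent napkin if it is
unclaimed, and otherwise is napkinless.  The returned state consists of the set of
claimed napkins and the set of napkinless diners. -/
def dine (σ : Fin n → Bool) (w : Equiv.Perm (Fin n)) :
    Finset (Fin n) × Finset (Fin n) :=
  (List.finRange n).foldl
    (fun st j =>
      let s := w.symm j
      let pref := if σ j then s else leftNapkin s
      let other := if σ j then leftNapkin s else s
      if pref ∉ st.1 then (insert pref st.1, st.2)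
      else if other ∉ st.1 then (insert other st.1, st.2)
      else (st.1, insert j st.2))
    (∅, ∅)

/-- The set of napkinless diners for the seating arrangement `(w, σ)`. -/
def napkinless (σ : Fin n → Bool) (w : Equiv.Perm (Fin n)) : Finset (Fin n) :=
  (dine σ w).2

/-- `ν(w,σ)`, the number of napkinless diners. -/
def nu (σ : Fin n → Bool) (w : Equiv.Perm (Fin n)) : ℕ := (napkinless σ w).card

/-- A seating order puts diner `1` in seat `1` (index `0` here). -/
def IsSeating (w : Equiv.Perm (Fin n)) : Prop :=
  ∀ i : Fin n, (i : ℕ) = 0 → (w i : ℕ) = 0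

instance : DecidablePred (IsSeating (n := n)) := fun w =>
  decidable_of_iff (∀ i : Fin n, (i : ℕ) = 0 → (w i : ℕ) = 0) Iff.rfl

/-- `ν_max(σ)`, the maximal number of napkinless diners over all seating orders. -/
def nuMax (σ : Fin n → Bool) : ℕ :=
  (Finset.univ.filter fun w : Equiv.Perm (Fin n) => IsSeating w).sup (nu σ)

/-- The value `±1` of a napkin preference. -/
def sign (b : Bool) : ℤ := if b then 1 else -1

/-- The drift `h(σ) = max(0, max over prefixes of σ₁ + ⋯ + σᵢ)`. -/
def drift (σ : Fin n → Bool) : ℕ :=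
  (Finset.range (n + 1)).sup fun i =>
    (∑ j ∈ Finset.univ.filter (fun j : Fin n => (j : ℕ) < i), sign (σ j)).toNat

/-- A bench collection: `q` pairwise disjoint triples `aᵢ < bᵢ < cᵢ` in `{1,…,n}`. -/
structure BenchCollection (n q : ℕ) where
  a : Fin q → Fin n
  b : Fin q → Fin n
  c : Fin q → Fin n
  hab : ∀ i, a i < b i
  hbc : ∀ i, b i < c i
  disj : ∀ i j : Fin q, i ≠ j →
    Disjoint ({a i, b i, c i} : Finset (Fin n)) ({a j, b j, c j} : Finset (Fin n))

/-- A bench is balanced when its two smallest members have opposite preferences. -/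
def Balanced (σ : Fin n → Bool) (β : BenchCollection n q) (i : Fin q) : Prop :=
  sign (σ (β.a i)) + sign (σ (β.b i)) = 0

instance (σ : Fin n → Bool) (β : BenchCollection n q) :
    DecidablePred (Balanced σ β) := fun i =>
  decidable_of_iff (sign (σ (β.a i)) + sign (σ (β.b i)) = 0) Iff.rfl

/-- `b(β,σ)`, the number of balanced benches of `β`. -/
def balance (σ : Fin n → Bool) (β : BenchCollection n q) : ℕ :=
  (Finset.univ.filter fun i => Balanced σ β i).card

/-! ### Auxiliary development for Statement 12 -/

/-- The `m`-th step of the walk, extended by `0` beyond `n`. -/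
def step (σ : Fin n → Bool) (m : ℕ) : ℤ :=
  if h : m < n then sign (σ ⟨m, h⟩) else 0

/-- Prefix sums of the walk. -/
def T (σ : Fin n → Bool) (i : ℕ) : ℤ := ∑ m ∈ Finset.range i, step σ m

lemma sign_not (b : Bool) : sign (!b) = -sign b := by cases b <;> simp [sign]

lemma sign_eq (b : Bool) : sign b = 1 - 2 * (if b = false then 1 else 0) := by
  cases b <;> norm_num [sign]

lemma step_bound (σ : Fin n → Bool) (m : ℕ) : -1 ≤ step σ m ∧ step σ m ≤ 1 := by
  unfold step
  split
  · rw [sign_eq]; split <;> norm_num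
  · norm_num

lemma T_zero (σ : Fin n → Bool) : T σ 0 = 0 := by simp [T]

lemma T_succ (σ : Fin n → Bool) (i : ℕ) : T σ (i + 1) = T σ i + step σ i :=
  Finset.sum_range_succ _ _

lemma T_lip (σ : Fin n → Bool) {a b : ℕ} (hab : a ≤ b) :
    T σ b - T σ a ≤ (b : ℤ) - a ∧ (a : ℤ) - b ≤ T σ b - T σ a := by
  induction b, hab using Nat.le_induction with
  | base => simp
  | succ b hab ih =>
    have hs := step_bound σ b
    rw [T_succ]
    push_cast
    omega

lemma S_eq_T (σ : Fin n → Bool) {i : ℕ} (hi : i ≤ n) :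
    (∑ j ∈ Finset.univ.filter (fun j : Fin n => (j : ℕ) < i), sign (σ j)) = T σ i := by
  rw [Finset.sum_filter]
  calc ∑ j : Fin n, (if (j : ℕ) < i then sign (σ j) else 0)
      = ∑ j : Fin n, (fun m => if m < i then step σ m else 0) (j : ℕ) :=
        Finset.sum_congr rfl fun j _ => by simp [step, j.isLt]
    _ = ∑ m ∈ Finset.range n, (fun m => if m < i then step σ m else 0) m :=
        Fin.sum_univ_eq_sum_range (fun m => if m < i then step σ m else 0) n
    _ = ∑ m ∈ Finset.range n, (if m < i then step σ m else 0) := rfl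
    _ = ∑ m ∈ (Finset.range n).filter (fun m => m < i), step σ m :=
        (Finset.sum_filter _ _).symm
    _ = T σ i := by
        unfold T
        congr 1
        ext m
        simp only [Finset.mem_filter, Finset.mem_range]
        omega

lemma drift_ge_iff (σ : Fin n → Bool) {h : ℕ} (hh : 1 ≤ h) :
    h ≤ drift σ ↔ ∃ i, i ≤ n ∧ (h : ℤ) ≤ T σ i := by
  unfold drift
  rw [Finset.le_sup_iff (by rw [Nat.bot_eq_zero]; omega : (⊥ : ℕ) < h)]
  constructor
  · rintro ⟨i, hi, hle⟩
    rw [Finset.mem_range] at hi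
    have hi' : i ≤ n := by omega
    rw [S_eq_T σ hi'] at hle
    exact ⟨i, hi', by omega⟩
  · rintro ⟨i, hi, hle⟩
    refine ⟨i, Finset.mem_range.mpr (by omega), ?_⟩
    rw [S_eq_T σ hi]
    omega

lemma T_not (σ : Fin n → Bool) (i : ℕ) : T (fun j => !σ j) i = -T σ i := by
  unfold T
  rw [← Finset.sum_neg_distrib]
  refine Finset.sum_congr rfl fun m _ => ?_
  unfold step
  split
  · exact sign_not _
  · simp

/-- The number of `false` (i.e. `-1`) entries. -/
def Fcnt (σ : Fin n → Bool) : ℕ := (Finset.univ.filter fun j => σ j = false).card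

lemma T_n (σ : Fin n → Bool) : T σ n = (n : ℤ) - 2 * Fcnt σ := by
  have h1 : T σ n = ∑ j : Fin n, sign (σ j) := by
    rw [← S_eq_T σ (le_refl n)]
    congr 1
    exact Finset.filter_true_of_mem fun j _ => j.isLt
  rw [h1, Finset.sum_congr rfl fun j _ => sign_eq (σ j), Finset.sum_sub_distrib,
    ← Finset.mul_sum, Finset.sum_boole, Finset.sum_const]
  simp [Fcnt]

lemma card_Fcnt_eq (k : ℕ) :
    ((Finset.univ : Finset (Fin n → Bool)).filter fun σ => Fcnt σ = k).card = n.choose k := by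
  have hpc := Finset.card_powersetCard k (Finset.univ : Finset (Fin n))
  rw [Finset.card_univ, Fintype.card_fin] at hpc
  rw [← hpc]
  apply Finset.card_bij (fun σ _ => Finset.univ.filter fun j => σ j = false)
  · intro σ hσ
    simp only [Finset.mem_filter, Finset.mem_univ, true_and] at hσ
    rw [Finset.mem_powersetCard]
    exact ⟨Finset.subset_univ _, hσ⟩
  · intro σ₁ _ σ₂ _ hEq
    funext j
    have hj := Finset.ext_iff.mp hEq j
    simp only [Finset.mem_filter, Finset.mem_univ, true_and] at hj
    rcases hb1 : σ₁ j with _ | _ <;> rcases hb2 : σ₂ j with _ | _ <;>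
      simp [hb1, hb2] at hj ⊢
  · intro s hs
    rw [Finset.mem_powersetCard] at hs
    refine ⟨fun j => decide (j ∉ s), ?_, ?_⟩
    · simp only [Finset.mem_filter, Finset.mem_univ, true_and, Fcnt]
      rw [← hs.2]
      refine Finset.mem_filter.mpr ⟨Finset.mem_univ _, ?_⟩
      congr 1
      ext j
      simp
    · ext j
      simp

/-- A helper for comparing cardinalities of filters with equivalent predicates. -/
lemma card_filter_iff {α : Type*} [Fintype α] (p q : α → Prop)
    [DecidablePred p] [DecidablePred q] (hpq : ∀ x, p x ↔ q x) :
    ((Finset.univ : Finset α).filter p).card = ((Finset.univ : Finset α).filter q).card :=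
  congrArg Finset.card (Finset.filter_congr fun x _ => hpq x)

lemma E_split {h : ℕ} (h2 : h ≤ n) :
    ((Finset.univ : Finset (Fin n → Bool)).filter fun σ => (h : ℤ) ≤ T σ n).card
      = ((Finset.univ : Finset (Fin n → Bool)).filter
          fun σ => ((h : ℤ) + 2) ≤ T σ n).card + n.choose ((n - h) / 2) := by
  have e1 : ((Finset.univ : Finset (Fin n → Bool)).filter fun σ => (h : ℤ) ≤ T σ n).card
      = ((Finset.univ : Finset (Fin n → Bool)).filter
          fun σ => Fcnt σ ≤ (n - h) / 2).card :=
    card_filter_iff _ _ fun σ => by rw [T_n]; omega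
  have e2 : ((Finset.univ : Finset (Fin n → Bool)).filter fun σ => (h : ℤ) + 2 ≤ T σ n).card
      = ((Finset.univ : Finset (Fin n → Bool)).filter
          fun σ => Fcnt σ < (n - h) / 2).card :=
    card_filter_iff _ _ fun σ => by rw [T_n]; omega
  rw [e1, e2, ← card_Fcnt_eq (n := n) ((n - h) / 2)]
  rw [← Finset.card_union_of_disjoint (by
    simp only [Finset.disjoint_left, Finset.mem_filter, Finset.mem_univ, true_and]
    omega)]
  rw [← Finset.filter_or]
  exact congrArg Finset.card (Finset.filter_congr fun σ _ => by omega)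

/-- Reflection of a sequence from position `t` on. -/
def reflAt (σ : Fin n → Bool) (t : ℕ) : Fin n → Bool :=
  fun j => if t ≤ (j : ℕ) then !σ j else σ j

lemma step_reflAt_eq (σ : Fin n → Bool) {t m : ℕ} (hmt : m < t) :
    step (reflAt σ t) m = step σ m := by
  unfold step reflAt
  split
  · rw [if_neg (show ¬t ≤ m by omega)]
  · rfl

lemma T_reflAt_le (σ : Fin n → Bool) (t : ℕ) {i : ℕ} (hit : i ≤ t) :
    T (reflAt σ t) i = T σ i := by
  refine Finset.sum_congr rfl fun m hm => ?_
  rw [Finset.mem_range] at hm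
  exact step_reflAt_eq σ (by omega)

lemma step_reflAt_neg (σ : Fin n → Bool) {t m : ℕ} (htm : t ≤ m) :
    step (reflAt σ t) m = -step σ m := by
  unfold step reflAt
  split
  · exact sign_not _
  · simp

lemma T_reflAt_ge (σ : Fin n → Bool) (t : ℕ) {i : ℕ} (hti : t ≤ i) :
    T (reflAt σ t) i = 2 * T σ t - T σ i := by
  induction i, hti using Nat.le_induction with
  | base => rw [T_reflAt_le σ t (le_refl t)]; ring
  | succ i hti ih =>
    rw [T_succ, T_succ, ih, step_reflAt_neg σ hti]
    ring

lemma reflAt_reflAt (σ : Fin n → Bool) (t : ℕ) : reflAt (reflAt σ t) t = σ := by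
  funext j
  unfold reflAt
  by_cases hj : t ≤ (j : ℕ) <;> simp [hj]

/-- The first time the walk reaches level `h` (defaulting to `n+1`). -/
def tau (h : ℕ) (σ : Fin n → Bool) : ℕ :=
  Nat.find (show ∃ i, (h : ℤ) ≤ T σ i ∨ i = n + 1 from ⟨n + 1, Or.inr rfl⟩)

lemma tau_spec (h : ℕ) (σ : Fin n → Bool) :
    (h : ℤ) ≤ T σ (tau h σ) ∨ tau h σ = n + 1 :=
  Nat.find_spec (show ∃ i, (h : ℤ) ≤ T σ i ∨ i = n + 1 from ⟨n + 1, Or.inr rfl⟩)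

lemma tau_le {h : ℕ} {σ : Fin n → Bool} (hD : ∃ i, i ≤ n ∧ (h : ℤ) ≤ T σ i) :
    tau h σ ≤ n := by
  obtain ⟨i, hi, hle⟩ := hD
  exact le_trans
    (Nat.find_min' (show ∃ i, (h : ℤ) ≤ T σ i ∨ i = n + 1 from ⟨n + 1, Or.inr rfl⟩)
      (Or.inl hle)) hi

lemma tau_lt_T {h : ℕ} {σ : Fin n → Bool} {i : ℕ} (hi : i < tau h σ) : T σ i < h := by
  have hm : ¬((h : ℤ) ≤ T σ i ∨ i = n + 1) :=
    Nat.find_min (show ∃ i, (h : ℤ) ≤ T σ i ∨ i = n + 1 from ⟨n + 1, Or.inr rfl⟩) hi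
  push_neg at hm
  omega

lemma tau_T {h : ℕ} (hh : 1 ≤ h) {σ : Fin n → Bool}
    (hD : ∃ i, i ≤ n ∧ (h : ℤ) ≤ T σ i) : T σ (tau h σ) = h := by
  have hle := tau_le hD
  have hge : (h : ℤ) ≤ T σ (tau h σ) := by
    rcases tau_spec h σ with hs | hs
    · exact hs
    · omega
  rcases Nat.eq_zero_or_pos (tau h σ) with h0 | h0
  · rw [h0, T_zero] at hge; omega
  · obtain ⟨t, ht⟩ : ∃ t, tau h σ = t + 1 := ⟨tau h σ - 1, by omega⟩
    have h1 : T σ t < h := tau_lt_T (show t < tau h σ by omega)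
    have h2 := step_bound σ t
    have h3 := T_succ σ t
    rw [ht] at hge ⊢
    omega

lemma tau_reflAt {h : ℕ} (hh : 1 ≤ h) {σ : Fin n → Bool}
    (hD : ∃ i, i ≤ n ∧ (h : ℤ) ≤ T σ i) :
    tau h (reflAt σ (tau h σ)) = tau h σ := by
  have hle := tau_le hD
  apply le_antisymm
  · apply Nat.find_min'
    refine Or.inl ?_
    rw [T_reflAt_le σ _ (le_refl _), tau_T hh hD]
  · refine (Nat.le_find_iff _ _).mpr fun i hi => ?_
    push_neg
    refine ⟨?_, by omega⟩
    rw [T_reflAt_le σ _ (le_of_lt hi)]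
    have := tau_lt_T hi
    omega

/-- The reflection map used in the reflection principle. -/
def reflD (h : ℕ) (σ : Fin n → Bool) : Fin n → Bool := reflAt σ (tau h σ)

lemma reflD_involutive {h : ℕ} (hh : 1 ≤ h) {σ : Fin n → Bool}
    (hD : ∃ i, i ≤ n ∧ (h : ℤ) ≤ T σ i) : reflD h (reflD h σ) = σ := by
  unfold reflD
  rw [tau_reflAt hh hD, reflAt_reflAt]

lemma T_reflD_n {h : ℕ} (hh : 1 ≤ h) {σ : Fin n → Bool}
    (hD : ∃ i, i ≤ n ∧ (h : ℤ) ≤ T σ i) :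
    T (reflD h σ) n = 2 * (h : ℤ) - T σ n := by
  unfold reflD
  rw [T_reflAt_ge σ _ (tau_le hD), tau_T hh hD]

lemma drift_reflD {h : ℕ} (hh : 1 ≤ h) {σ : Fin n → Bool}
    (hD : ∃ i, i ≤ n ∧ (h : ℤ) ≤ T σ i) : h ≤ drift (reflD h σ) := by
  rw [drift_ge_iff _ hh]
  refine ⟨tau h σ, tau_le hD, ?_⟩
  unfold reflD
  rw [T_reflAt_le σ _ (le_refl _), tau_T hh hD]

lemma M_eq {h : ℕ} (hh : 1 ≤ h) :
    ((Finset.univ : Finset (Fin n → Bool)).filter fun σ => h ≤ drift σ).card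
      = ((Finset.univ : Finset (Fin n → Bool)).filter fun σ => (h : ℤ) ≤ T σ n).card
        + ((Finset.univ : Finset (Fin n → Bool)).filter
            fun σ => (h : ℤ) + 1 ≤ T σ n).card := by
  rw [← Finset.card_filter_add_card_filter_not
    (s := (Finset.univ : Finset (Fin n → Bool)).filter fun σ => h ≤ drift σ)
    (fun σ => (h : ℤ) ≤ T σ n)]
  rw [Finset.filter_filter, Finset.filter_filter]
  congr 1
  · refine congrArg Finset.card (Finset.filter_congr fun σ _ => ?_)
    constructor
    · exact fun hx => hx.2
    · intro hx
      exact ⟨(drift_ge_iff σ hh).mpr ⟨n, le_refl n, hx⟩, hx⟩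
  · apply Finset.card_bij' (i := fun σ _ => reflD h σ) (j := fun σ _ => reflD h σ)
    · intro σ hσ
      simp only [Finset.mem_filter, Finset.mem_univ, true_and] at hσ ⊢
      have hD := (drift_ge_iff σ hh).mp hσ.1
      rw [T_reflD_n hh hD]
      have := hσ.2
      omega
    · intro σ hσ
      simp only [Finset.mem_filter, Finset.mem_univ, true_and] at hσ ⊢
      have hD : ∃ i, i ≤ n ∧ (h : ℤ) ≤ T σ i := ⟨n, le_refl n, by omega⟩
      refine ⟨drift_reflD hh hD, ?_⟩
      rw [T_reflD_n hh hD]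
      omega
    · intro σ hσ
      simp only [Finset.mem_filter, Finset.mem_univ, true_and] at hσ
      exact reflD_involutive hh ((drift_ge_iff σ hh).mp hσ.1)
    · intro σ hσ
      simp only [Finset.mem_filter, Finset.mem_univ, true_and] at hσ
      exact reflD_involutive hh ⟨n, le_refl n, by omega⟩

lemma not_both {h : ℕ} (h3 : n < 3 * h) {σ : Fin n → Bool}
    (H1 : h ≤ drift σ) (H2 : h ≤ drift fun j => !σ j) : False := by
  have hh : 1 ≤ h := by omega
  obtain ⟨i, hi, hTi⟩ := (drift_ge_iff σ hh).mp H1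
  obtain ⟨j, hj, hTj⟩ := (drift_ge_iff _ hh).mp H2
  rw [T_not] at hTj
  rcases le_total i j with hij | hij
  · have l1 := T_lip σ hij
    have l2 := T_lip σ (Nat.zero_le i)
    rw [T_zero] at l2
    push_cast at l1 l2
    omega
  · have l1 := T_lip σ hij
    have l2 := T_lip σ (Nat.zero_le j)
    rw [T_zero] at l2
    push_cast at l1 l2
    omega

lemma card_not (p : (Fin n → Bool) → Prop) [DecidablePred p] :
    ((Finset.univ : Finset (Fin n → Bool)).filter fun σ => p fun j => !σ j).card
      = ((Finset.univ : Finset (Fin n → Bool)).filter p).card := by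
  have hnn : ∀ σ : Fin n → Bool, (fun j => !!σ j) = σ := fun σ => funext fun j => Bool.not_not _
  apply Finset.card_bij' (i := fun σ _ => fun j => !σ j) (j := fun σ _ => fun j => !σ j)
  · intro σ hσ
    simpa using hσ
  · intro σ hσ
    simp only [Finset.mem_filter, Finset.mem_univ, true_and] at hσ ⊢
    rw [hnn σ]
    exact hσ
  · intro σ _
    exact hnn σ
  · intro σ _
    exact hnn σ

lemma card_max_ge {h : ℕ} (h3 : n < 3 * h) :
    ((Finset.univ : Finset (Fin n → Bool)).filter
        fun σ => h ≤ max (drift σ) (drift fun j => !σ j)).card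
      = 2 * ((Finset.univ : Finset (Fin n → Bool)).filter fun σ => h ≤ drift σ).card := by
  rw [← Finset.card_filter_add_card_filter_not
    (s := (Finset.univ : Finset (Fin n → Bool)).filter
      fun σ => h ≤ max (drift σ) (drift fun j => !σ j))
    (fun σ => h ≤ drift σ)]
  rw [Finset.filter_filter, Finset.filter_filter]
  have e1 : ((Finset.univ : Finset (Fin n → Bool)).filter
      fun σ => (h ≤ max (drift σ) (drift fun j => !σ j)) ∧ h ≤ drift σ).card
      = ((Finset.univ : Finset (Fin n → Bool)).filter fun σ => h ≤ drift σ).card := by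
    refine congrArg Finset.card (Finset.filter_congr fun σ _ => ?_)
    constructor
    · exact fun hx => hx.2
    · exact fun hx => ⟨le_trans hx (le_max_left _ _), hx⟩
  have e2 : ((Finset.univ : Finset (Fin n → Bool)).filter
      fun σ => (h ≤ max (drift σ) (drift fun j => !σ j)) ∧ ¬h ≤ drift σ).card
      = ((Finset.univ : Finset (Fin n → Bool)).filter
          fun σ => h ≤ drift fun j => !σ j).card := by
    refine congrArg Finset.card (Finset.filter_congr fun σ _ => ?_)
    constructor
    · intro hx
      rcases le_max_iff.mp hx.1 with hc | hc
      · exact absurd hc hx.2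
      · exact hc
    · intro hx
      refine ⟨le_trans hx (le_max_right _ _), fun hc => not_both h3 hc hx⟩
  rw [e1, e2, card_not (p := fun σ => h ≤ drift σ)]
  ring

lemma card_max_eq_split {h : ℕ} :
    ((Finset.univ : Finset (Fin n → Bool)).filter
        fun σ => max (drift σ) (drift fun j => !σ j) = h).card
      + ((Finset.univ : Finset (Fin n → Bool)).filter
          fun σ => h + 1 ≤ max (drift σ) (drift fun j => !σ j)).card
      = ((Finset.univ : Finset (Fin n → Bool)).filter
          fun σ => h ≤ max (drift σ) (drift fun j => !σ j)).card := by
  rw [← Finset.card_filter_add_card_filter_not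
    (s := (Finset.univ : Finset (Fin n → Bool)).filter
      fun σ => h ≤ max (drift σ) (drift fun j => !σ j))
    (fun σ => max (drift σ) (drift fun j => !σ j) = h)]
  rw [Finset.filter_filter, Finset.filter_filter]
  have g1 : ∀ m : ℕ, m = h ↔ (h ≤ m ∧ m = h) := fun m => by omega
  have g2 : ∀ m : ℕ, h + 1 ≤ m ↔ (h ≤ m ∧ ¬m = h) := fun m => by omega
  congr 1
  · exact card_filter_iff _ _ fun σ => g1 _
  · exact card_filter_iff _ _ fun σ => g2 _

/-- Writing `n = 3q + r` with `q = ⌊n/3⌋`, for any integer `h` with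
`q + r < h ≤ n`, the number of sequences `σ ∈ {±1}ⁿ` with `max(h(σ), h(-σ)) = h`
equals `2·C(n, ⌊(n-h)/2⌋)`. -/
theorem statement12 (n q r : ℕ) (hn : 1 ≤ n) (hq : q = n / 3) (hnr : n = 3 * q + r)
    (h : ℕ) (h1 : q + r < h) (h2 : h ≤ n) :
    ((Finset.univ : Finset (Fin n → Bool)).filter
        fun σ => max (drift σ) (drift fun j => !σ j) = h).card
      = 2 * n.choose ((n - h) / 2) := by
  have hh : 1 ≤ h := by omega
  have h3 : n < 3 * h := by omega
  have h3' : n < 3 * (h + 1) := by omega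
  have key := card_max_eq_split (n := n) (h := h)
  rw [card_max_ge h3] at key
  rw [card_max_ge h3'] at key
  rw [M_eq hh] at key
  rw [M_eq (Nat.le_add_left 1 h)] at key
  simp only [Nat.cast_add, Nat.cast_one] at key
  simp only [show ((h : ℤ) + 1 + 1) = (h : ℤ) + 2 from by ring] at key
  have hE := E_split (n := n) h2
  linarith [key, hE]

end Napkin
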